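/- Let M ⊆ B(H,K) be a σ-TRO with sequence (m_i) satisfying ∑_i m m_i* m_i = m for all m ∈ M and ‖∑_{i≤n} m_i* m_i‖ ≤ 1. Let D₁ = closed span of M M*, D₂ = closed span of M* M. Suppose E is a right D₁-module, F is a right D₂-module, and a : F × M* → E is a bounded bilinear balanced pairing with a(e·m, n*) = e (m n*) realizing E ≅ F ⊗_{D₂} M*. Then for every f ∈ F (of the form f = e ⊗ m) one has ∑_i a(f, m_i*) · m_i = f, with norm convergence. -/
import Mathlib


open Filter Topology ContinuousLinearMap

/-- Let `M ⊆ B(H,K)` be a σ-TRO with sequence `(m i)` satisfying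
`∑ᵢ m mᵢ* mᵢ = m` for all `m ∈ M` and `‖∑_{i<n} mᵢ* mᵢ‖ ≤ 1`. Let `E` be a right
`D₁ = [M M*]`-module, `F` a right `D₂ = [M* M]`-module, `t : (e, m) ↦ e ⊗ m ∈ F` the
balanced pairing and `a : (f, n*) ↦ a(f ⊗ n*) ∈ E` the bounded pairing realizing
`E ≅ F ⊗_{D₂} M*`, so that `a((e ⊗ m) ⊗ n*) = e · (m n*)`. Then for every elementary tensor
`f = e ⊗ m` (`m ∈ M`) one has `∑ᵢ a(f ⊗ mᵢ*) ⊗ mᵢ = f` with norm convergence. -/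
theorem stmt_11 {H K : Type*} [NormedAddCommGroup H] [InnerProductSpace ℂ H] [CompleteSpace H]
    [NormedAddCommGroup K] [InnerProductSpace ℂ K] [CompleteSpace K]
    (M : Submodule ℂ (H →L[ℂ] K)) (hMc : IsClosed (M : Set (H →L[ℂ] K)))
    (hMtro : ∀ x ∈ M, ∀ y ∈ M, ∀ z ∈ M, x ∘L (adjoint y ∘L z) ∈ M)
    (m : ℕ → (H →L[ℂ] K)) (hm : ∀ i, m i ∈ M)
    (hmn : ∀ n, ‖∑ i ∈ Finset.range n, adjoint (m i) ∘L m i‖ ≤ 1)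
    (hms : ∀ x ∈ M, Tendsto (fun n => ∑ i ∈ Finset.range n, x ∘L (adjoint (m i) ∘L m i))
      atTop (𝓝 x))
    {E F : Type*} [NormedAddCommGroup E] [NormedSpace ℂ E]
    [NormedAddCommGroup F] [NormedSpace ℂ F]
    -- the right action of D₁ = [M M*] ⊆ B(K) on E
    (ρ : E →ₗ[ℂ] (K →L[ℂ] K) →ₗ[ℂ] E)
    (hρ : ∀ (e : E) (d : K →L[ℂ] K), ‖ρ e d‖ ≤ ‖e‖ * ‖d‖)
    -- the pairing (e, m) ↦ e ⊗ m ∈ F ≅ E ⊗_{D₁} M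
    (t : E →ₗ[ℂ] (H →L[ℂ] K) →ₗ[ℂ] F)
    (ht : ∀ (e : E) (x : H →L[ℂ] K), ‖t e x‖ ≤ ‖e‖ * ‖x‖)
    (htbal : ∀ (e : E), ∀ x ∈ M, ∀ y ∈ M, ∀ z ∈ M,
      t (ρ e (x ∘L adjoint y)) z = t e ((x ∘L adjoint y) ∘L z))
    -- the pairing (f, n*) ↦ a(f ⊗ n*) ∈ E realizing E ≅ F ⊗_{D₂} M*
    (a : F →ₗ[ℂ] (K →L[ℂ] H) →ₗ[ℂ] E)
    (ha : ∀ (f : F) (x : K →L[ℂ] H), ‖a f x‖ ≤ ‖f‖ * ‖x‖)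
    (hcompat : ∀ (e : E), ∀ x ∈ M, ∀ y ∈ M,
      a (t e x) (adjoint y) = ρ e (x ∘L adjoint y)) :
    ∀ (e : E), ∀ x ∈ M,
      Tendsto (fun n => ∑ i ∈ Finset.range n, t (a (t e x) (adjoint (m i))) (m i))
        atTop (𝓝 (t e x)) := by
  intro e x hx
  have key : ∀ i, t (a (t e x) (adjoint (m i))) (m i)
      = t e (x ∘L (adjoint (m i) ∘L m i)) := by
    intro i
    rw [hcompat e x hx (m i) (hm i), htbal e x hx (m i) (hm i) (m i) (hm i),
      ContinuousLinearMap.comp_assoc]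
  have hsum : ∀ n, ∑ i ∈ Finset.range n, t (a (t e x) (adjoint (m i))) (m i)
      = t e (∑ i ∈ Finset.range n, x ∘L (adjoint (m i) ∘L m i)) := by
    intro n
    rw [map_sum]
    exact Finset.sum_congr rfl fun i _ => key i
  have hte : Continuous (t e) := (LinearMap.mkContinuous (t e) ‖e‖ (ht e)).continuous
  simp only [hsum]
  exact (hte.tendsto x).comp (hms x hx)
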